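/- Let G be a finite group, r ∈ G, and z ∈ Z(r) (i.e. zr = rz). Let C be the conjugacy class of r in G and p : C → G a transversal with p(c)·r·p(c)⁻¹ = c for all c ∈ C. Let K be the conjugacy class of z in the group Z(r). Then, as functions G × G → ℂ, Σ_{c∈C} Σ_{k∈K} F^{c, p(c)·k·p(c)⁻¹} = (|K|/|Z(r)|)·Σ_{g∈G} F^{g·r·g⁻¹, g·z·g⁻¹}. -/
import Mathlib


/-!
Statement 14: For a finite group `G`, `r ∈ G`, `z ∈ Z(r)`, a transversal `p` of the
conjugacy class `C` of `r`, and `K` the conjugacy class of `z` in the group `Z(r)`: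
`Σ_{c∈C} Σ_{k∈K} F^{c, p(c)·k·p(c)⁻¹} = (|K|/|Z(r)|)·Σ_{g∈G} F^{g·r·g⁻¹, g·z·g⁻¹}`.
-/

open scoped Classical

noncomputable section

/-- `F^{g,h}`: the indicator function of the pair `(g,h)`. -/
def Fgh {G : Type*} (g h : G) : G × G → ℂ := fun x => if x = (g, h) then 1 else 0

/-- The conjugacy class of `r` in `G`, as a `Finset`. -/
def conjClass {G : Type*} [Group G] [Fintype G] (r : G) : Finset G :=
  Finset.image (fun g => g * r * g⁻¹) Finset.univ

/-- The centralizer `Z(r)` of `r` in `G`, as a `Finset`. -/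
def centFinset {G : Type*} [Group G] [Fintype G] (r : G) : Finset G :=
  Finset.univ.filter fun z => z * r = r * z

/-- The conjugacy class of `x` in the group `Z(r)`, as a `Finset` of `G`. -/
def conjClassIn {G : Type*} [Group G] [Fintype G] (r x : G) : Finset G :=
  (centFinset r).image fun w => w * x * w⁻¹

theorem class_sum_identity_first (G : Type*) [Group G] [Fintype G]
    (r z : G) (hz : z * r = r * z)
    (p : G → G) (hp : ∀ c ∈ conjClass r, p c * r * (p c)⁻¹ = c) :
    ∑ c ∈ conjClass r, ∑ k ∈ conjClassIn r z, Fgh c (p c * k * (p c)⁻¹)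
      = (((conjClassIn r z).card : ℂ) / ((centFinset r).card : ℂ)) •
          ∑ g : G, Fgh (g * r * g⁻¹) (g * z * g⁻¹) := by
  classical
  set Z := centFinset r with hZ
  set C := conjClass r with hC
  set K := conjClassIn r z with hK
  set S := Z.filter (fun s => s * z = z * s) with hS
  have hmemZ : ∀ w : G, w ∈ Z ↔ w * r = r * w := by
    intro w; simp [hZ, centFinset]
  -- fibers of the conjugation map all have cardinality `S.card`
  have fib : ∀ k ∈ K, (Z.filter fun w => w * z * w⁻¹ = k).card = S.card := by
    intro k hk
    obtain ⟨w0, hw0, rfl⟩ := Finset.mem_image.mp hk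
    have hw0Z : Commute w0 r := (hmemZ w0).mp hw0
    have heq : (Z.filter fun w => w * z * w⁻¹ = w0 * z * w0⁻¹)
        = S.image (fun s => w0 * s) := by
      ext w
      simp only [Finset.mem_filter, Finset.mem_image, hS]
      constructor
      · rintro ⟨hwZ, hconj⟩
        have hwr : Commute w r := (hmemZ w).mp hwZ
        refine ⟨w0⁻¹ * w, ⟨⟨(hmemZ _).mpr (Commute.mul_left hw0Z.inv_left hwr), ?_⟩,
          by group⟩⟩
        calc w0⁻¹ * w * z = (w0⁻¹ * (w * z * w⁻¹) * w0) * (w0⁻¹ * w) := by group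
          _ = (w0⁻¹ * (w0 * z * w0⁻¹) * w0) * (w0⁻¹ * w) := by rw [hconj]
          _ = z * (w0⁻¹ * w) := by group
      · rintro ⟨s, ⟨⟨hsZ, hsz⟩, rfl⟩⟩
        have hsr : Commute s r := (hmemZ s).mp hsZ
        refine ⟨(hmemZ _).mpr (Commute.mul_left hw0Z hsr), ?_⟩
        calc w0 * s * z * (w0 * s)⁻¹ = w0 * (s * z) * s⁻¹ * w0⁻¹ := by group
          _ = w0 * (z * s) * s⁻¹ * w0⁻¹ := by rw [hsz]
          _ = w0 * z * w0⁻¹ := by group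
    rw [heq, Finset.card_image_of_injective _ (mul_right_injective w0)]
  -- orbit-stabilizer
  have hmaps : ∀ w ∈ Z, w * z * w⁻¹ ∈ K := fun w hw => Finset.mem_image_of_mem _ hw
  have hcard : Z.card = K.card * S.card := by
    rw [Finset.card_eq_sum_card_fiberwise hmaps, Finset.sum_congr rfl fib,
      Finset.sum_const, smul_eq_mul]
  have hZpos : Z.card ≠ 0 := by
    have h1 : (1 : G) ∈ Z := by simp [hZ, centFinset]
    exact Finset.card_ne_zero_of_mem h1
  -- reindex the sum over G as sum over C × Z
  have hsum : (∑ g : G, Fgh (g * r * g⁻¹) (g * z * g⁻¹))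
      = ∑ q ∈ C ×ˢ Z, Fgh q.1 (p q.1 * (q.2 * z * q.2⁻¹) * (p q.1)⁻¹) := by
    refine Finset.sum_nbij' (fun g => (g * r * g⁻¹, (p (g * r * g⁻¹))⁻¹ * g))
      (fun q => p q.1 * q.2) ?_ ?_ ?_ ?_ ?_
    · intro g _
      have hcC : g * r * g⁻¹ ∈ C := Finset.mem_image_of_mem _ (Finset.mem_univ g)
      have hpc := hp _ hcC
      refine Finset.mem_product.mpr ⟨hcC, (hmemZ _).mpr ?_⟩
      calc (p (g * r * g⁻¹))⁻¹ * g * r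
          = (p (g * r * g⁻¹))⁻¹ * (g * r * g⁻¹) * g := by group
        _ = (p (g * r * g⁻¹))⁻¹ * (p (g * r * g⁻¹) * r * (p (g * r * g⁻¹))⁻¹) * g := by
            rw [hpc]
        _ = r * ((p (g * r * g⁻¹))⁻¹ * g) := by group
    · intro q _; exact Finset.mem_univ _
    · intro g _; dsimp only; group
    · rintro ⟨c, w⟩ hq
      obtain ⟨hcC, hwZ⟩ := Finset.mem_product.mp hq
      have hpc : p c * r * (p c)⁻¹ = c := hp _ hcC
      have hwr : Commute w r := (hmemZ w).mp hwZ
      have hconj : p c * w * r * (p c * w)⁻¹ = c := by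
        calc p c * w * r * (p c * w)⁻¹ = p c * (w * r) * w⁻¹ * (p c)⁻¹ := by group
          _ = p c * (r * w) * w⁻¹ * (p c)⁻¹ := by rw [hwr.eq]
          _ = p c * r * (p c)⁻¹ := by group
          _ = c := hpc
      dsimp only
      rw [Prod.mk.injEq]
      refine ⟨hconj, ?_⟩
      rw [hconj]; group
    · intro g _
      dsimp only
      congr 1
      group
  -- fiberwise inner sum
  have inner : ∀ c, (∑ w ∈ Z, Fgh c (p c * (w * z * w⁻¹) * (p c)⁻¹))
      = ∑ k ∈ K, S.card • Fgh c (p c * k * (p c)⁻¹) := by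
    intro c
    rw [← Finset.sum_fiberwise_of_maps_to hmaps
      (fun w => Fgh c (p c * (w * z * w⁻¹) * (p c)⁻¹))]
    refine Finset.sum_congr rfl fun k hk => ?_
    rw [Finset.sum_congr rfl (fun w hw => ?_), Finset.sum_const, fib k hk]
    obtain ⟨-, hwk⟩ := Finset.mem_filter.mp hw
    rw [hwk]
  rw [hsum, Finset.sum_product, Finset.sum_congr rfl (fun c _ => inner c),
    Finset.smul_sum]
  refine Finset.sum_congr rfl fun c _ => ?_
  rw [Finset.smul_sum]
  refine Finset.sum_congr rfl fun k _ => ?_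
  rw [← Nat.cast_smul_eq_nsmul ℂ, smul_smul]
  have hone : (K.card : ℂ) / (Z.card : ℂ) * (S.card : ℂ) = 1 := by
    rw [div_mul_eq_mul_div, ← Nat.cast_mul, ← hcard, div_self]
    exact_mod_cast hZpos
  rw [hone, one_smul]

end
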